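/- A normal subgroup H of a finite group G is isolated in G if and only if ψ(G) - ψ(H) = |H| · (ψ(G/H) - 1). -/

import Mathlib

/-- `H` is isolated in `G`: every `x ∈ G` is in `H` or `⟨x⟩ ∩ H = 1`. -/
def Subgroup.IsIsolated {G : Type*} [Group G] (H : Subgroup G) : Prop :=
  ∀ x : G, x ∈ H ∨ Subgroup.zpowers x ⊓ H = ⊥

/-- `o_H(x)`: the smallest positive `m` with `x ^ m ∈ H`. -/
noncomputable def relOrder {G : Type*} [Group G] (H : Subgroup G) (x : G) : ℕ :=
  sInf {m : ℕ | 0 < m ∧ x ^ m ∈ H}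

/-- `ψ(G)`: the sum of the orders of the elements of `G`. -/
noncomputable def psi (G : Type*) [Group G] [Fintype G] : ℕ :=
  ∑ x : G, orderOf x

section Aux

variable {G : Type*} [Group G] [Fintype G] (H : Subgroup G) [H.Normal]

lemma orderOf_mk_dvd (x : G) : orderOf (x : G ⧸ H) ∣ orderOf x :=
  orderOf_map_dvd (QuotientGroup.mk' H) x

lemma orderOf_eq_iff_inf_bot (x : G) :
    orderOf (x : G ⧸ H) = orderOf x ↔ Subgroup.zpowers x ⊓ H = ⊥ := by
  constructor
  · intro h
    rw [Subgroup.eq_bot_iff_forall]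
    rintro g ⟨⟨k, rfl⟩, hgH⟩
    have h1 : ((x : G ⧸ H)) ^ k = 1 := by
      rw [← QuotientGroup.mk_zpow, QuotientGroup.eq_one_iff]
      exact hgH
    have : (orderOf (x : G ⧸ H) : ℤ) ∣ k := orderOf_dvd_iff_zpow_eq_one.mpr h1
    rw [h] at this
    exact orderOf_dvd_iff_zpow_eq_one.mp this
  · intro h
    have hmem : x ^ orderOf (x : G ⧸ H) ∈ Subgroup.zpowers x ⊓ H := by
      refine Subgroup.mem_inf.mpr ⟨Subgroup.npow_mem_zpowers x _, ?_⟩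
      rw [← QuotientGroup.eq_one_iff, QuotientGroup.mk_pow, pow_orderOf_eq_one]
    rw [h, Subgroup.mem_bot] at hmem
    exact Nat.dvd_antisymm (orderOf_mk_dvd H x)
      (orderOf_dvd_of_pow_eq_one hmem)

end Aux

section Aux2
variable {G : Type*} [Group G] [Fintype G] (H : Subgroup G) [H.Normal]

open scoped Classical in
lemma fiber_card (y : G ⧸ H) :
    (Finset.univ.filter fun x : G => ((x : G ⧸ H) = y)).card = Nat.card H := by
  have e : H ≃ {x : G // (x : G ⧸ H) = y} :=
    { toFun := fun h => ⟨y.out * h, by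
        rw [QuotientGroup.mk_mul_of_mem _ h.2, QuotientGroup.out_eq']⟩
      invFun := fun x => ⟨y.out⁻¹ * x, by
        have : (y.out : G ⧸ H) = (x : G ⧸ H) := by rw [QuotientGroup.out_eq', x.2]
        exact (QuotientGroup.eq ).mp this⟩
      left_inv := fun h => by simp
      right_inv := fun x => by simp }
  rw [← Fintype.card_subtype, Nat.card_eq_fintype_card, Fintype.card_congr e]

end Aux2

open scoped Classical in
theorem stmt2 {G : Type*} [Group G] [Fintype G] (H : Subgroup G) [H.Normal]
    [Fintype (G ⧸ H)] :
    H.IsIsolated ↔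
      ((psi G : ℤ) - (∑ x : H, orderOf (x : G) : ℤ) =
        (Nat.card H : ℤ) * ((∑ y : G ⧸ H, orderOf y : ℤ) - 1)) := by
  classical
  -- the filter of elements not in H
  set s : Finset G := Finset.univ.filter (fun x => x ∉ H) with hs
  -- LHS equals sum over s of orderOf x
  have hL : (psi G : ℤ) - (∑ x : H, orderOf (x : G) : ℤ)
      = ∑ x ∈ s, (orderOf x : ℤ) := by
    have h1 : (∑ x : H, (orderOf (x : G) : ℤ))
        = ∑ x ∈ Finset.univ.filter (fun x : G => x ∈ H), (orderOf x : ℤ) :=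
      (Finset.sum_subtype (p := fun x : G => x ∈ H)
        (Finset.univ.filter (fun x : G => x ∈ H))
        (by simp) (fun x : G => (orderOf x : ℤ))).symm
    have h2 : (psi G : ℤ) = ∑ x : G, (orderOf x : ℤ) := by
      simp [psi]
    rw [h2, h1, ← Finset.sum_filter_add_sum_filter_not Finset.univ (fun x : G => x ∈ H)
      (fun x : G => (orderOf x : ℤ)), add_sub_cancel_left]
  -- total fiberwise sum
  have hfib : ∑ x : G, (orderOf (x : G ⧸ H) : ℤ)
      = (Nat.card H : ℤ) * ∑ y : G ⧸ H, (orderOf y : ℤ) := by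
    rw [← Finset.sum_fiberwise' Finset.univ (fun x : G => (x : G ⧸ H))
      (fun y : G ⧸ H => (orderOf y : ℤ))]
    rw [Finset.mul_sum]
    refine Finset.sum_congr rfl fun y _ => ?_
    rw [Finset.sum_const, fiber_card H y, nsmul_eq_mul]
  -- sum over H of orderOf (mk x) = card H
  have hHsum : ∑ x ∈ Finset.univ.filter (fun x : G => x ∈ H), (orderOf (x : G ⧸ H) : ℤ)
      = (Nat.card H : ℤ) := by
    have hone : ∀ x ∈ Finset.univ.filter (fun x : G => x ∈ H),
        (orderOf (x : G ⧸ H) : ℤ) = 1 := by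
      intro x hx
      simp only [Finset.mem_filter] at hx
      rw [show ((x : G ⧸ H)) = 1 from (QuotientGroup.eq_one_iff x).mpr hx.2, orderOf_one]
      norm_num
    rw [Finset.sum_congr rfl hone, Finset.sum_const, nsmul_eq_mul, mul_one]
    rw [← fiber_card H (1 : G ⧸ H)]
    norm_cast
    congr 1
    ext x
    simp [QuotientGroup.eq_one_iff]
  -- RHS equals sum over s of orderOf (mk x)
  have hR : (Nat.card H : ℤ) * ((∑ y : G ⧸ H, orderOf y : ℤ) - 1)
      = ∑ x ∈ s, (orderOf (x : G ⧸ H) : ℤ) := by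
    have hsplit := Finset.sum_filter_add_sum_filter_not Finset.univ (fun x : G => x ∈ H)
      (fun x : G => (orderOf (x : G ⧸ H) : ℤ))
    rw [hHsum] at hsplit
    have : (∑ x ∈ s, (orderOf (x : G ⧸ H) : ℤ))
        = ∑ x : G, (orderOf (x : G ⧸ H) : ℤ) - Nat.card H := by
      rw [← hsplit]; ring
    rw [this, hfib]
    push_cast
    ring
  rw [hL, hR]
  constructor
  · intro hiso
    refine Finset.sum_congr rfl fun x hx => ?_
    simp only [hs, Finset.mem_filter] at hx
    rcases hiso x with h | h
    · exact absurd h hx.2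
    · exact_mod_cast congrArg (Nat.cast (R := ℤ)) ((orderOf_eq_iff_inf_bot H x).mpr h).symm
  · intro hsum x
    by_cases hxH : x ∈ H
    · exact Or.inl hxH
    right
    have hle : ∀ x ∈ s, (orderOf (x : G ⧸ H) : ℤ) ≤ (orderOf x : ℤ) := by
      intro x _
      exact_mod_cast Nat.le_of_dvd (orderOf_pos x) (orderOf_mk_dvd H x)
    have heq := (Finset.sum_eq_sum_iff_of_le hle).mp hsum.symm
    have hx : x ∈ s := by simp [hs, hxH]
    exact (orderOf_eq_iff_inf_bot H x).mp (by exact_mod_cast heq x hx)
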